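/- For all decorated trees σ, τ ∈ 𝔗, every a = (𝔱, m) ∈ 𝔇₊ and every i ∈ {0,…,d}: ↑^i (σ ↷̂^a τ) = (↑^i σ) ↷̂^a τ + σ ↷̂^a (↑^i τ) − σ ↷̂^{a − e_i} τ in 𝒯, where a − e_i := (𝔱, m − e_i) and the last term is set to zero if m_i = 0. -/

import Mathlib

noncomputable section

inductive DT (d : ℕ) (Lp Lm : Type) : Type
| node : (Fin (d+1) → ℕ) → Lm → List ((Lp × (Fin (d+1) → ℕ)) × DT d Lp Lm) → DT d Lp Lm

variable {d : ℕ} {Lp Lm : Type}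

noncomputable instance DT.linOrd : LinearOrder ((Lp × (Fin (d+1) → ℕ)) × DT d Lp Lm) :=
  letI : DecidableRel (@WellOrderingRel ((Lp × (Fin (d+1) → ℕ)) × DT d Lp Lm)) := Classical.decRel _
  linearOrderOfSTO WellOrderingRel

instance [Zero Lm] : Inhabited (DT d Lp Lm) := ⟨.node 0 0 []⟩

/-- normal form: recursively sort the lists of branches -/
def DT.nf : DT d Lp Lm → DT d Lp Lm
| .node k l cs => .node k l
    ((cs.attach.map (fun x => (x.1.1, DT.nf x.1.2))).mergeSort (fun a b => a ≤ b))
decreasing_by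
  obtain ⟨⟨e, t⟩, hx⟩ := x
  have h1 := List.sizeOf_lt_of_mem hx
  simp_all [DT.node.sizeOf_spec]
  omega

noncomputable instance : DecidableEq (DT d Lp Lm) := Classical.decEq _

/-- multi-indices -/
abbrev MIdx (d : ℕ) : Type := Fin (d+1) → ℕ

/-- decorated trees without noise label at the root (elements of `𝔗₊`):
a root decoration together with a list of planted trees -/
abbrev DTP (d : ℕ) (Lp Lm : Type) : Type :=
  MIdx d × List ((Lp × MIdx d) × DT d Lp Lm)

/-- binomial coefficient of multi-indices -/
def mbinom (k ℓ : MIdx d) : ℕ := ∏ j, (k j).choose (ℓ j)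

/-- factorial of a multi-index -/
def mfact (k : MIdx d) : ℕ := ∏ j, (k j).factorial

/-- elements of the free vector space `𝒯` spanned by decorated trees -/
abbrev FS (d : ℕ) (Lp Lm : Type) : Type := DT d Lp Lm →₀ ℝ

/-- elements of the free vector space `𝒯₊` -/
abbrev FSP (d : ℕ) (Lp Lm : Type) : Type := DTP d Lp Lm →₀ ℝ

/-- linear extension of a map defined on basis elements -/
def bindF {α β : Type} [AddCommMonoid β] [Module ℝ β] (x : α →₀ ℝ) (f : α → β) : β :=
  x.sum (fun a c => c • f a)

/-- normal form on `𝔗₊` -/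
def nfP (σ : DTP d Lp Lm) : DTP d Lp Lm :=
  (σ.1, ((σ.2.map (fun c => (c.1, c.2.nf))).mergeSort (fun a b => a ≤ b)))

mutual
/-- the deformed grafting product `σ ↷̂^a τ` -/
def graftD (σ : DT d Lp Lm) (a : Lp × MIdx d) : DT d Lp Lm → FS d Lp Lm
| .node k l cs =>
    (∑ ℓ ∈ Finset.Iic (k ⊓ a.2), (mbinom k ℓ : ℝ) •
      Finsupp.single (DT.nf (.node (k - ℓ) l (((a.1, a.2 - ℓ), σ) :: cs))) (1:ℝ)) +
    bindF (graftList σ a cs) (fun cs' => Finsupp.single (DT.nf (.node k l cs')) (1:ℝ))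
termination_by τ => sizeOf τ
decreasing_by all_goals first
  | (simp_all [DT.node.sizeOf_spec]; omega)
  | simp_all [DT.node.sizeOf_spec]

/-- grafting into one of the trees of a list of planted trees -/
def graftList (σ : DT d Lp Lm) (a : Lp × MIdx d) :
    List ((Lp × MIdx d) × DT d Lp Lm) → (List ((Lp × MIdx d) × DT d Lp Lm) →₀ ℝ)
| [] => 0
| c :: cs =>
    bindF (graftD σ a c.2) (fun t => Finsupp.single ((c.1, t) :: cs) (1:ℝ)) +
    bindF (graftList σ a cs) (fun cs' => Finsupp.single (c :: cs') (1:ℝ))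
termination_by cs => sizeOf cs
decreasing_by
  all_goals (try obtain ⟨e, t⟩ := c)
  all_goals simp_all [DT.node.sizeOf_spec]
  all_goals omega
end

mutual
/-- the operator `↑^i` adding `e_i` to the decoration of one node, summed over all nodes -/
def upE (i : Fin (d+1)) : DT d Lp Lm → FS d Lp Lm
| .node k l cs =>
    Finsupp.single (DT.nf (.node (k + Pi.single i 1) l cs)) (1:ℝ) +
    bindF (upEList i cs) (fun cs' => Finsupp.single (DT.nf (.node k l cs')) (1:ℝ))
termination_by τ => sizeOf τ
decreasing_by all_goals first
  | (simp_all [DT.node.sizeOf_spec]; omega)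
  | simp_all [DT.node.sizeOf_spec]

def upEList (i : Fin (d+1)) :
    List ((Lp × MIdx d) × DT d Lp Lm) → (List ((Lp × MIdx d) × DT d Lp Lm) →₀ ℝ)
| [] => 0
| c :: cs =>
    bindF (upE i c.2) (fun t => Finsupp.single ((c.1, t) :: cs) (1:ℝ)) +
    bindF (upEList i cs) (fun cs' => Finsupp.single (c :: cs') (1:ℝ))
termination_by cs => sizeOf cs
decreasing_by
  all_goals (try obtain ⟨e, t⟩ := c)
  all_goals simp_all [DT.node.sizeOf_spec]
  all_goals omega
end

/-- symmetry factor of a decorated tree -/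
def SD : DT d Lp Lm → ℝ
| .node k l cs => (mfact k : ℝ) *
    ((cs.dedup).map (fun c => ((cs.count c).factorial : ℝ))).prod *
    (cs.attach.map (fun x => SD x.1.2)).prod
decreasing_by
  obtain ⟨⟨e, t⟩, hx⟩ := x
  have h1 := List.sizeOf_lt_of_mem hx
  simp_all [DT.node.sizeOf_spec]
  omega

/-- symmetry factor of an element of `𝔗₊` -/
def SDP (σ : DTP d Lp Lm) : ℝ :=
  (mfact σ.1 : ℝ) *
    ((σ.2.dedup).map (fun c => ((σ.2.count c).factorial : ℝ))).prod *
    (σ.2.map (fun c => SD c.2)).prod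

/-- number of nodes of a decorated tree -/
def sizeDT : DT d Lp Lm → ℕ
| .node _ _ cs => 1 + (cs.attach.map (fun x => sizeDT x.1.2)).sum
decreasing_by
  obtain ⟨⟨e, t⟩, hx⟩ := x
  have h1 := List.sizeOf_lt_of_mem hx
  simp_all [DT.node.sizeOf_spec]
  omega

/-- all ways to distribute the elements of a list into `n` ordered blocks -/
def splitsN {α : Type} (n : ℕ) : List α → List (List (List α))
| [] => [List.replicate n []]
| a :: as => (splitsN n as).flatMap
    (fun bs => (List.range n).map (fun i => bs.set i (a :: bs.getD i [])))

/-- grafting a list of planted trees at a single node carrying decoration `n`,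
with the binomial deformation: returns the new node decoration together with the
newly attached planted trees -/
def rootG : List ((Lp × MIdx d) × DT d Lp Lm) → MIdx d →
    ((MIdx d × List ((Lp × MIdx d) × DT d Lp Lm)) →₀ ℝ)
| [], n => Finsupp.single (n, []) 1
| (a, s) :: ps, n => ∑ ℓ ∈ Finset.Iic (n ⊓ a.2), (mbinom n ℓ : ℝ) •
    bindF (rootG ps (n - ℓ))
      (fun rg => Finsupp.single (rg.1, ((a.1, a.2 - ℓ), s) :: rg.2) (1:ℝ))

mutual
/-- simultaneous deformed grafting of the planted trees of `P` onto the nodes of `τ`,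
together with the distribution of the monomial `X^k` over the nodes of `τ`
(the `⋆₂`-product `(X^k ∏ P) ⋆₂ τ`) -/
def starAux (P : List ((Lp × MIdx d) × DT d Lp Lm)) (k : MIdx d) :
    DT d Lp Lm → FS d Lp Lm
| .node n l cs =>
    ((splitsN (cs.length + 1) P).map (fun bs =>
      ∑ kr ∈ Finset.Iic k,
        bindF (rootG (bs.headD []) n) (fun rg =>
          bindF (starList bs.tail (k - kr) cs) (fun cs' =>
            Finsupp.single (DT.nf (.node (rg.1 + kr) l (rg.2 ++ cs'))) (1:ℝ))))).sum
termination_by τ => sizeOf τ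
decreasing_by all_goals first
  | (simp_all [DT.node.sizeOf_spec]; omega)
  | simp_all [DT.node.sizeOf_spec]

/-- distributing blocks of planted trees and parts of a monomial into a list of branches -/
def starList : List (List ((Lp × MIdx d) × DT d Lp Lm)) → MIdx d →
    List ((Lp × MIdx d) × DT d Lp Lm) → (List ((Lp × MIdx d) × DT d Lp Lm) →₀ ℝ)
| _, k, [] => if k = 0 then Finsupp.single [] 1 else 0
| bs, k, c :: cs => ∑ k₁ ∈ Finset.Iic k,
    bindF (starAux (bs.headD []) k₁ c.2) (fun t =>
      bindF (starList bs.tail (k - k₁) cs) (fun cs' =>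
        Finsupp.single ((c.1, t) :: cs') (1:ℝ)))
termination_by _ _ cs => sizeOf cs
decreasing_by
  all_goals (try obtain ⟨e, t⟩ := c)
  all_goals simp_all [DT.node.sizeOf_spec]
  all_goals omega
end

/-- the product `σ ⋆₂ τ` for `σ ∈ 𝔗₊` and `τ ∈ 𝔗` -/
def starP (σ : DTP d Lp Lm) (τ : DT d Lp Lm) : FS d Lp Lm := starAux σ.2 σ.1 τ

/-- the product `σ ⋆₂ ρ` for `σ, ρ ∈ 𝔗₊` -/
def starPP (σ ρ : DTP d Lp Lm) : FSP d Lp Lm :=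
  ((splitsN (ρ.2.length + 1) σ.2).map (fun bs =>
    ∑ kr ∈ Finset.Iic σ.1,
      bindF (rootG (bs.headD []) ρ.1) (fun rg =>
        bindF (starList bs.tail (σ.1 - kr) ρ.2) (fun cs' =>
          Finsupp.single (nfP (rg.1 + kr, rg.2 ++ cs')) (1:ℝ))))).sum

variable [Zero Lm]

noncomputable instance : DecidableEq Lm := Classical.decEq _

mutual
/-- the insertion product `σ₁⋯σ_m ⋆₁ τ` of a forest (given as a list) into a decorated tree -/
def star1 : List (DT d Lp Lm) → DT d Lp Lm → FS d Lp Lm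
| [], τ => Finsupp.single τ.nf 1
| σs@(_ :: _), .node k l cs =>
    (if l = 0 then
      ((List.range σs.length).map (fun j =>
        ((splitsN cs.length (σs.eraseIdx j)).map (fun bs =>
          bindF (star1List bs cs) (fun cs' =>
            starP (k, cs') (σs.getD j default)))).sum)).sum
     else 0) +
    ((splitsN cs.length σs).map (fun bs =>
      bindF (star1List bs cs) (fun cs' =>
        Finsupp.single (DT.nf (.node k l cs')) (1:ℝ)))).sum
termination_by _ τ => sizeOf τ
decreasing_by all_goals first
  | (simp_all [DT.node.sizeOf_spec]; omega)
  | simp_all [DT.node.sizeOf_spec]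

/-- inserting blocks of a forest into a list of branches -/
def star1List : List (List (DT d Lp Lm)) →
    List ((Lp × MIdx d) × DT d Lp Lm) → (List ((Lp × MIdx d) × DT d Lp Lm) →₀ ℝ)
| _, [] => Finsupp.single [] 1
| bs, c :: cs => bindF (star1 (bs.headD []) c.2) (fun t =>
    bindF (star1List bs.tail cs) (fun cs' => Finsupp.single ((c.1, t) :: cs') (1:ℝ)))
termination_by _ cs => sizeOf cs
decreasing_by
  all_goals (try obtain ⟨e, t⟩ := c)
  all_goals simp_all [DT.node.sizeOf_spec]
  all_goals omega
end

/-- the product `σ₁⋯σ_m ⋆_∘ ρ` for `ρ ∈ 𝔗₊` (insertion outside the root) -/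
def starO (σs : List (DT d Lp Lm)) (ρ : DTP d Lp Lm) : FSP d Lp Lm :=
  ((splitsN ρ.2.length σs).map (fun bs =>
    bindF (star1List bs ρ.2) (fun cs' => Finsupp.single (nfP (ρ.1, cs')) (1:ℝ)))).sum

/-- symmetry factor of a forest of decorated trees -/
def SF (f : Multiset (DT d Lp Lm)) : ℝ :=
  ∏ t ∈ f.toFinset, (((f.count t).factorial : ℝ) * (SD t) ^ (f.count t))

/-- value of a finitely supported map `β : 𝔗 → ℝ`, extended multiplicatively, on a forest -/
def betaF (β : DT d Lp Lm →₀ ℝ) (f : Multiset (DT d Lp Lm)) : ℝ := (f.map β).prod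

/-- a finite set of forests containing all forests built from trees in `s` that can
contribute to an insertion into a tree with at most `N` nodes -/
def forestsLe (N : ℕ) (s : Finset (DT d Lp Lm)) : Finset (Multiset (DT d Lp Lm)) :=
  ((N • s.val).powerset).toFinset

/-- the map `M*_β τ := Σ_{σ̄} (β(σ̄)/S(σ̄)) σ̄ ⋆₁ τ`, the sum running over all forests
(only those consisting of trees in the support of `β`, with at most `sizeDT τ` trees,
contribute) -/
def Mstar (β : DT d Lp Lm →₀ ℝ) (τ : DT d Lp Lm) : FS d Lp Lm :=
  ∑ f ∈ forestsLe (sizeDT τ) β.support, (betaF β f / SF f) • star1 f.toList τ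

/-- the map `M̂*_β σ := Σ_{σ̄} (β(σ̄)/S(σ̄)) σ̄ ⋆_∘ σ` on `𝒯₊` -/
def Mhat (β : DT d Lp Lm →₀ ℝ) (ρ : DTP d Lp Lm) : FSP d Lp Lm :=
  ∑ f ∈ forestsLe (1 + (ρ.2.map (fun c => sizeDT c.2)).sum) β.support,
    (betaF β f / SF f) • starO f.toList ρ

/-- the polynomial ring `ℝ[Z_a : a ∈ 𝔇₊]` -/
abbrev RP (d : ℕ) (Lp : Type) : Type := MvPolynomial (Lp × MIdx d) ℝ

/-- the derivation `∂^{e_i} = Σ_a Z_{a+e_i} D_a` (only finitely many terms act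
nontrivially on a given polynomial) -/
def partialE (i : Fin (d+1)) (P : RP d Lp) : RP d Lp :=
  ∑ a ∈ P.vars, MvPolynomial.X (a.1, a.2 + Pi.single i 1) * MvPolynomial.pderiv a P

/-- `∂^k := ∏_i (∂^{e_i})^{k_i}` -/
def partialK (k : MIdx d) (P : RP d Lp) : RP d Lp :=
  (List.finRange (d+1)).foldl (fun Q j => (partialE j)^[k j] Q) P

/-- `D_{a_1} ⋯ D_{a_n}` applied along the edge decorations of a list of branches -/
def pderivFold (cs : List ((Lp × MIdx d) × DT d Lp Lm)) (P : RP d Lp) : RP d Lp :=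
  cs.foldr (fun c Q => MvPolynomial.pderiv c.1 Q) P

/-- the elementary differentials `F_𝔱(τ)` associated with a family of nonlinearities
`(F_𝔱^𝔩)`: `F_𝔱(X^k Ξ_𝔩 ∏_j I_{a_j}(τ_j)) = (∂^k D_{a_1}⋯D_{a_n} F_𝔱^𝔩) ∏_j F_{𝔱_j}(τ_j)` -/
def Felem (Fnl : Lp → Lm → RP d Lp) : Lp → DT d Lp Lm → RP d Lp
| t, .node k l cs =>
    partialK k (pderivFold cs (Fnl t l)) *
      (cs.attach.map (fun x => Felem Fnl x.1.1.1 x.1.2)).prod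
decreasing_by
  obtain ⟨⟨e, t'⟩, hx⟩ := x
  have h1 := List.sizeOf_lt_of_mem hx
  simp_all [DT.node.sizeOf_spec]
  omega

/-- linear extension of the elementary differentials to `𝒯` -/
def FelemL (Fnl : Lp → Lm → RP d Lp) (t : Lp) (x : FS d Lp Lm) : RP d Lp :=
  bindF x (fun τ => Felem Fnl t τ)

/-! ### auxiliary lemmas -/

section BindFLemmas
variable {α γ : Type} {β : Type} [AddCommMonoid β] [Module ℝ β]

theorem bindF_eq_lift (x : α →₀ ℝ) (f : α → β) :
    bindF x f = Finsupp.lift β ℝ α f x := (Finsupp.lift_apply β ℝ α f x).symm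

theorem bindF_zero (f : α → β) : bindF (0 : α →₀ ℝ) f = 0 := by
  simp [bindF_eq_lift]

theorem bindF_add (x y : α →₀ ℝ) (f : α → β) :
    bindF (x + y) f = bindF x f + bindF y f := by
  rw [bindF_eq_lift, bindF_eq_lift, bindF_eq_lift, map_add]

theorem bindF_smul (c : ℝ) (x : α →₀ ℝ) (f : α → β) :
    bindF (c • x) f = c • bindF x f := by
  simp [bindF_eq_lift]

theorem bindF_single (a : α) (c : ℝ) (f : α → β) :
    bindF (Finsupp.single a c) f = c • f a := by
  simp [bindF_eq_lift]

theorem bindF_finset_sum {ι : Type*} (s : Finset ι) (g : ι → (α →₀ ℝ)) (f : α → β) :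
    bindF (∑ i ∈ s, g i) f = ∑ i ∈ s, bindF (g i) f := by
  simp [bindF_eq_lift]

theorem bindF_add_fun (x : α →₀ ℝ) (f g : α → β) :
    bindF x (fun a => f a + g a) = bindF x f + bindF x g := by
  simp [bindF, Finsupp.sum_add, smul_add]

theorem bindF_smul_fun (x : α →₀ ℝ) (c : ℝ) (f : α → β) :
    bindF x (fun a => c • f a) = c • bindF x f := by
  simp only [bindF, Finsupp.smul_sum]
  exact Finsupp.sum_congr fun a _ => smul_comm _ _ _

theorem bindF_congr {x : α →₀ ℝ} {f g : α → β} (h : ∀ a, f a = g a) :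
    bindF x f = bindF x g := by
  simp only [bindF]; exact Finsupp.sum_congr fun a _ => by rw [h]

theorem bindF_assoc (x : α →₀ ℝ) (g : α → (γ →₀ ℝ)) (f : γ → β) :
    bindF (bindF x g) f = bindF x (fun a => bindF (g a) f) := by
  conv_lhs => rw [bindF_eq_lift]
  rw [show bindF x g = x.sum fun a c => c • g a from rfl, map_finsuppSum]
  refine Finsupp.sum_congr fun a _ => ?_
  rw [map_smul]
  exact congrArg _ (bindF_eq_lift (g a) f).symm

theorem bindF_comm (x : α →₀ ℝ) (y : γ →₀ ℝ) (h : α → γ → β) :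
    bindF x (fun p => bindF y (fun q => h p q)) =
      bindF y (fun q => bindF x (fun p => h p q)) := by
  simp only [bindF, Finsupp.smul_sum]
  rw [Finsupp.sum_comm]
  exact Finsupp.sum_congr fun a _ => Finsupp.sum_congr fun b _ => by
    rw [smul_comm]

theorem bindF_mapDomain (h : α → γ) (x : α →₀ ℝ) (f : γ → β) :
    bindF (Finsupp.mapDomain h x) f = bindF x (fun a => f (h a)) := by
  simp only [bindF]
  exact Finsupp.sum_mapDomain_index (by simp) (by intros; rw [add_smul])

end BindFLemmas

/-! ### sorting and normal form lemmas -/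

section SortNf
variable {d : ℕ} {Lp Lm : Type}

/-- abbreviation for the sorting used in `DT.nf` -/
def sortL (l : List ((Lp × MIdx d) × DT d Lp Lm)) : List ((Lp × MIdx d) × DT d Lp Lm) :=
  l.mergeSort (fun a b => a ≤ b)

/-- normal form of a child -/
def nfc (c : (Lp × MIdx d) × DT d Lp Lm) : (Lp × MIdx d) × DT d Lp Lm := (c.1, c.2.nf)

/-- normal form on lists of children -/
def qL (cs : List ((Lp × MIdx d) × DT d Lp Lm)) : List ((Lp × MIdx d) × DT d Lp Lm) :=
  sortL (cs.map nfc)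

theorem nf_node (k : MIdx d) (l : Lm) (cs : List ((Lp × MIdx d) × DT d Lp Lm)) :
    DT.nf (DT.node k l cs) = DT.node k l (qL cs) := by
  rw [DT.nf]
  congr 1
  rw [qL, sortL]
  congr 1
  exact List.attach_map_val (l := cs) (f := fun c => (c.1, c.2.nf))

theorem sortL_perm (l : List ((Lp × MIdx d) × DT d Lp Lm)) : (sortL l).Perm l :=
  List.mergeSort_perm l _

theorem sortL_congr {l₁ l₂ : List ((Lp × MIdx d) × DT d Lp Lm)} (h : l₁.Perm l₂) :
    sortL l₁ = sortL l₂ := by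
  have hs₁ := List.pairwise_mergeSort (le := fun (a b : (Lp × MIdx d) × DT d Lp Lm) => decide (a ≤ b))
    (fun a b c hab hbc => by
      simp only [decide_eq_true_eq] at *; exact le_trans hab hbc)
    (fun a b => by
      simp only [Bool.or_eq_true, decide_eq_true_eq]; exact le_total a b) l₁
  have hs₂ := List.pairwise_mergeSort (le := fun (a b : (Lp × MIdx d) × DT d Lp Lm) => decide (a ≤ b))
    (fun a b c hab hbc => by
      simp only [decide_eq_true_eq] at *; exact le_trans hab hbc)
    (fun a b => by
      simp only [Bool.or_eq_true, decide_eq_true_eq]; exact le_total a b) l₂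
  have hp : (sortL l₁).Perm (sortL l₂) :=
    ((sortL_perm l₁).trans h).trans (sortL_perm l₂).symm
  have hs₁' : (sortL l₁).Pairwise (· ≤ ·) :=
    List.Pairwise.imp (fun h => by simpa using h) hs₁
  have hs₂' : (sortL l₂).Pairwise (· ≤ ·) :=
    List.Pairwise.imp (fun h => by simpa using h) hs₂
  exact hp.eq_of_pairwise' hs₁' hs₂'

theorem qL_perm_congr {l₁ l₂ : List ((Lp × MIdx d) × DT d Lp Lm)} (h : l₁.Perm l₂) :
    qL l₁ = qL l₂ := sortL_congr (h.map nfc)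

theorem qL_cons (c : (Lp × MIdx d) × DT d Lp Lm) (cs : List ((Lp × MIdx d) × DT d Lp Lm)) :
    qL (c :: cs) = sortL (nfc c :: qL cs) := by
  rw [qL, List.map_cons]
  exact sortL_congr (List.Perm.cons _ (sortL_perm _).symm)

end SortNf

section NfIdem
variable {d : ℕ} {Lp Lm : Type}

theorem child_size_lt {c : (Lp × MIdx d) × DT d Lp Lm} {cs : List ((Lp × MIdx d) × DT d Lp Lm)}
    (h : c ∈ cs) : sizeOf c.2 < sizeOf cs := by
  have h1 := List.sizeOf_lt_of_mem h
  obtain ⟨e, t⟩ := c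
  simp only [Prod.mk.sizeOf_spec] at h1 ⊢
  omega

theorem cs_size_lt (k : MIdx d) (l : Lm) (cs : List ((Lp × MIdx d) × DT d Lp Lm)) :
    sizeOf cs < sizeOf (DT.node k l cs) := by
  simp only [DT.node.sizeOf_spec]
  omega

theorem sizeOf_nf_aux : ∀ n : ℕ,
    (∀ t : DT d Lp Lm, sizeOf t ≤ n → sizeOf t.nf = sizeOf t) ∧
    (∀ cs : List ((Lp × MIdx d) × DT d Lp Lm), sizeOf cs ≤ n →
      sizeOf (cs.map nfc) = sizeOf cs) := by
  intro n
  induction n using Nat.strong_induction_on with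
  | _ n ih =>
    constructor
    · rintro ⟨k, l, cs⟩ ht
      have hcs : sizeOf cs < n := lt_of_lt_of_le (cs_size_lt k l cs) ht
      rw [nf_node]
      simp only [DT.node.sizeOf_spec]
      have h1 : sizeOf (qL cs) = sizeOf (cs.map nfc) :=
        (sortL_perm (cs.map nfc)).sizeOf_eq_sizeOf
      rw [h1, (ih _ hcs).2 cs le_rfl]
    · intro cs hcs
      induction cs with
      | nil => rfl
      | cons c cs' ihl =>
        have h2 : sizeOf c.2 < n :=
          lt_of_lt_of_le (child_size_lt (List.mem_cons_self (a := c) (l := cs'))) hcs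
        have h3 : sizeOf cs' ≤ n := by
          simp only [List.cons.sizeOf_spec] at hcs; omega
        simp only [List.map_cons, List.cons.sizeOf_spec]
        rw [ihl h3]
        obtain ⟨e, t⟩ := c
        simp only [nfc, Prod.mk.sizeOf_spec]
        rw [(ih _ h2).1 t le_rfl]

theorem sizeOf_nf (t : DT d Lp Lm) : sizeOf t.nf = sizeOf t :=
  (sizeOf_nf_aux (sizeOf t)).1 t le_rfl

theorem sizeOf_map_nfc (cs : List ((Lp × MIdx d) × DT d Lp Lm)) :
    sizeOf (cs.map nfc) = sizeOf cs :=
  (sizeOf_nf_aux (sizeOf cs)).2 cs le_rfl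

theorem sizeOf_qL (cs : List ((Lp × MIdx d) × DT d Lp Lm)) :
    sizeOf (qL cs) = sizeOf cs := by
  rw [qL, (sortL_perm (cs.map nfc)).sizeOf_eq_sizeOf, sizeOf_map_nfc]

theorem nf_idem_aux : ∀ n : ℕ,
    (∀ t : DT d Lp Lm, sizeOf t ≤ n → t.nf.nf = t.nf) ∧
    (∀ cs : List ((Lp × MIdx d) × DT d Lp Lm), sizeOf cs ≤ n →
      (cs.map nfc).map nfc = cs.map nfc) := by
  intro n
  induction n using Nat.strong_induction_on with
  | _ n ih =>
    constructor
    · rintro ⟨k, l, cs⟩ ht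
      have hcs : sizeOf cs < n := lt_of_lt_of_le (cs_size_lt k l cs) ht
      rw [nf_node, nf_node]
      congr 1
      rw [qL, qL]
      have hp : ((sortL (cs.map nfc)).map nfc).Perm ((cs.map nfc).map nfc) :=
        (sortL_perm (cs.map nfc)).map nfc
      rw [sortL_congr hp, (ih _ hcs).2 cs le_rfl]
    · intro cs hcs
      induction cs with
      | nil => rfl
      | cons c cs' ihl =>
        have h2 : sizeOf c.2 < n :=
          lt_of_lt_of_le (child_size_lt (List.mem_cons_self (a := c) (l := cs'))) hcs
        have h3 : sizeOf cs' ≤ n := by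
          simp only [List.cons.sizeOf_spec] at hcs; omega
        simp only [List.map_cons]
        rw [ihl h3]
        obtain ⟨e, t⟩ := c
        simp only [nfc]
        rw [(ih _ h2).1 t le_rfl]

theorem nf_idem (t : DT d Lp Lm) : t.nf.nf = t.nf :=
  (nf_idem_aux (sizeOf t)).1 t le_rfl

theorem map_nfc_idem (cs : List ((Lp × MIdx d) × DT d Lp Lm)) :
    (cs.map nfc).map nfc = cs.map nfc :=
  (nf_idem_aux (sizeOf cs)).2 cs le_rfl

theorem nfc_idem (c : (Lp × MIdx d) × DT d Lp Lm) : nfc (nfc c) = nfc c := by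
  simp [nfc, nf_idem]

theorem map_nfc_qL (cs : List ((Lp × MIdx d) × DT d Lp Lm)) :
    (qL cs).map nfc = qL cs := by
  conv_rhs => rw [← List.map_id (qL cs)]
  refine List.map_congr_left fun c hc => ?_
  have hc' : c ∈ cs.map nfc := (sortL_perm _).mem_iff.mp hc
  obtain ⟨c₀, _, rfl⟩ := List.mem_map.mp hc'
  exact nfc_idem c₀

theorem sortL_idem (l : List ((Lp × MIdx d) × DT d Lp Lm)) : sortL (sortL l) = sortL l :=
  sortL_congr (sortL_perm l)

theorem qL_qL (cs : List ((Lp × MIdx d) × DT d Lp Lm)) : qL (qL cs) = qL cs := by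
  rw [qL, map_nfc_qL, qL, sortL_idem]

end NfIdem

section MapDomainBindF
variable {α γ β' : Type}

theorem mapDomain_eq_bindF (h : α → γ) (y : α →₀ ℝ) :
    Finsupp.mapDomain h y = bindF y (fun u => Finsupp.single (h u) (1:ℝ)) := by
  rw [Finsupp.mapDomain, bindF]
  exact Finsupp.sum_congr fun a b => by rw [Finsupp.smul_single', mul_one]

theorem mapDomain_bindF_single (h : α → γ) (x : β' →₀ ℝ) (f : β' → α) :
    Finsupp.mapDomain h (bindF x (fun u => Finsupp.single (f u) (1:ℝ))) =
      bindF x (fun u => Finsupp.single (h (f u)) (1:ℝ)) := by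
  rw [mapDomain_eq_bindF, bindF_assoc]
  exact bindF_congr fun u => by rw [bindF_single, one_smul]

end MapDomainBindF

section PermInv
variable {d : ℕ} {Lp Lm : Type}

theorem perm_inv {cs ds : List ((Lp × MIdx d) × DT d Lp Lm)} (h : cs.Perm ds) :
    (∀ i, Finsupp.mapDomain qL (upEList i cs) = Finsupp.mapDomain qL (upEList i ds)) ∧
    (∀ (σ : DT d Lp Lm) (a : Lp × MIdx d),
      Finsupp.mapDomain qL (graftList σ a cs) = Finsupp.mapDomain qL (graftList σ a ds)) := by
  induction h with
  | nil => exact ⟨fun _ => rfl, fun _ _ => rfl⟩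
  | cons c h ih =>
    rename_i cs' ds'
    have hq : qL cs' = qL ds' := qL_perm_congr h
    constructor
    · intro i
      rw [upEList, upEList, Finsupp.mapDomain_add, Finsupp.mapDomain_add,
        mapDomain_bindF_single, mapDomain_bindF_single,
        mapDomain_bindF_single, mapDomain_bindF_single]
      congr 1
      · exact bindF_congr fun t => by rw [qL_cons, qL_cons, hq]
      · have e1 : bindF (upEList i cs') (fun u => Finsupp.single (qL (c :: u)) (1:ℝ)) =
            bindF (Finsupp.mapDomain qL (upEList i cs'))
              (fun e => Finsupp.single (sortL (nfc c :: e)) (1:ℝ)) := by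
          rw [bindF_mapDomain]
          exact bindF_congr fun u => by rw [qL_cons]
        have e2 : bindF (upEList i ds') (fun u => Finsupp.single (qL (c :: u)) (1:ℝ)) =
            bindF (Finsupp.mapDomain qL (upEList i ds'))
              (fun e => Finsupp.single (sortL (nfc c :: e)) (1:ℝ)) := by
          rw [bindF_mapDomain]
          exact bindF_congr fun u => by rw [qL_cons]
        rw [e1, e2, ih.1 i]
    · intro σ a
      rw [graftList, graftList, Finsupp.mapDomain_add, Finsupp.mapDomain_add,
        mapDomain_bindF_single, mapDomain_bindF_single,
        mapDomain_bindF_single, mapDomain_bindF_single]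
      congr 1
      · exact bindF_congr fun t => by rw [qL_cons, qL_cons, hq]
      · have e1 : bindF (graftList σ a cs') (fun u => Finsupp.single (qL (c :: u)) (1:ℝ)) =
            bindF (Finsupp.mapDomain qL (graftList σ a cs'))
              (fun e => Finsupp.single (sortL (nfc c :: e)) (1:ℝ)) := by
          rw [bindF_mapDomain]
          exact bindF_congr fun u => by rw [qL_cons]
        have e2 : bindF (graftList σ a ds') (fun u => Finsupp.single (qL (c :: u)) (1:ℝ)) =
            bindF (Finsupp.mapDomain qL (graftList σ a ds'))
              (fun e => Finsupp.single (sortL (nfc c :: e)) (1:ℝ)) := by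
          rw [bindF_mapDomain]
          exact bindF_congr fun u => by rw [qL_cons]
        rw [e1, e2, ih.2 σ a]
  | swap x y l =>
    have hperm : ∀ u : List ((Lp × MIdx d) × DT d Lp Lm), ∀ p q : (Lp × MIdx d) × DT d Lp Lm,
        qL (p :: q :: u) = qL (q :: p :: u) :=
      fun u p q => qL_perm_congr (List.Perm.swap q p u)
    constructor
    · intro i
      rw [upEList, upEList, upEList, upEList]
      simp only [bindF_add, bindF_assoc, bindF_single, one_smul, Finsupp.mapDomain_add,
        mapDomain_bindF_single]
      rw [show (fun t => Finsupp.single (qL ((y.1, t) :: x :: l)) (1:ℝ)) =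
          fun t => Finsupp.single (qL (x :: (y.1, t) :: l)) (1:ℝ) from
          funext fun t => by rw [hperm l (y.1, t) x],
        show (fun t => Finsupp.single (qL ((x.1, t) :: y :: l)) (1:ℝ)) =
          fun t => Finsupp.single (qL (y :: (x.1, t) :: l)) (1:ℝ) from
          funext fun t => by rw [hperm l (x.1, t) y],
        show (fun cs' => Finsupp.single (qL (y :: x :: cs')) (1:ℝ)) =
          fun cs' => Finsupp.single (qL (x :: y :: cs')) (1:ℝ) from
          funext fun cs' => by rw [hperm cs' y x]]
      abel
    · intro σ a
      rw [graftList, graftList, graftList, graftList]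
      simp only [bindF_add, bindF_assoc, bindF_single, one_smul, Finsupp.mapDomain_add,
        mapDomain_bindF_single]
      rw [show (fun t => Finsupp.single (qL ((y.1, t) :: x :: l)) (1:ℝ)) =
          fun t => Finsupp.single (qL (x :: (y.1, t) :: l)) (1:ℝ) from
          funext fun t => by rw [hperm l (y.1, t) x],
        show (fun t => Finsupp.single (qL ((x.1, t) :: y :: l)) (1:ℝ)) =
          fun t => Finsupp.single (qL (y :: (x.1, t) :: l)) (1:ℝ) from
          funext fun t => by rw [hperm l (x.1, t) y],
        show (fun cs' => Finsupp.single (qL (y :: x :: cs')) (1:ℝ)) =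
          fun cs' => Finsupp.single (qL (x :: y :: cs')) (1:ℝ) from
          funext fun cs' => by rw [hperm cs' y x]]
      abel
  | trans h₁ h₂ ih₁ ih₂ =>
    exact ⟨fun i => (ih₁.1 i).trans (ih₂.1 i), fun σ a => (ih₁.2 σ a).trans (ih₂.2 σ a)⟩

end PermInv

section NfInv
variable {d : ℕ} {Lp Lm : Type}

theorem nf_inv_aux : ∀ n : ℕ,
    (∀ t : DT d Lp Lm, sizeOf t ≤ n →
      (∀ i, upE i t.nf = upE i t) ∧
      (∀ (σ : DT d Lp Lm) (a : Lp × MIdx d), graftD σ a t.nf = graftD σ a t)) ∧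
    (∀ cs : List ((Lp × MIdx d) × DT d Lp Lm), sizeOf cs ≤ n →
      (∀ i, Finsupp.mapDomain qL (upEList i (cs.map nfc)) =
        Finsupp.mapDomain qL (upEList i cs)) ∧
      (∀ (σ : DT d Lp Lm) (a : Lp × MIdx d),
        Finsupp.mapDomain qL (graftList σ a (cs.map nfc)) =
        Finsupp.mapDomain qL (graftList σ a cs))) := by
  intro n
  induction n using Nat.strong_induction_on with
  | _ n ih =>
    constructor
    · rintro ⟨k, l, cs⟩ ht
      have hcs : sizeOf cs < n := lt_of_lt_of_le (cs_size_lt k l cs) ht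
      -- key: mapDomain qL (upEList/graftList of (qL cs)) = same of cs
      have keyU : ∀ i, Finsupp.mapDomain qL (upEList i (qL cs)) =
          Finsupp.mapDomain qL (upEList i cs) := by
        intro i
        rw [qL, (perm_inv (sortL_perm (cs.map nfc))).1 i]
        exact (ih _ hcs).2 cs le_rfl |>.1 i
      have keyG : ∀ (σ : DT d Lp Lm) (a : Lp × MIdx d),
          Finsupp.mapDomain qL (graftList σ a (qL cs)) =
          Finsupp.mapDomain qL (graftList σ a cs) := by
        intro σ a
        rw [qL, (perm_inv (sortL_perm (cs.map nfc))).2 σ a]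
        exact (ih _ hcs).2 cs le_rfl |>.2 σ a
      constructor
      · intro i
        rw [nf_node, upE, upE]
        congr 1
        · rw [nf_node, nf_node, qL_qL]
        · rw [show (fun cs' => Finsupp.single (DT.nf (DT.node k l cs')) (1:ℝ)) =
              fun cs' => Finsupp.single (DT.node k l (qL cs')) (1:ℝ) from
              funext fun cs' => by rw [nf_node]]
          rw [← bindF_mapDomain qL (upEList i (qL cs))
              (fun e => Finsupp.single (DT.node k l e) (1:ℝ)),
            ← bindF_mapDomain qL (upEList i cs)
              (fun e => Finsupp.single (DT.node k l e) (1:ℝ)), keyU i]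
      · intro σ a
        rw [nf_node, graftD, graftD]
        congr 1
        · refine Finset.sum_congr rfl fun ℓ _ => ?_
          congr 2
          rw [nf_node, nf_node, qL_cons, qL_cons, qL_qL]
        · rw [show (fun cs' => Finsupp.single (DT.nf (DT.node k l cs')) (1:ℝ)) =
              fun cs' => Finsupp.single (DT.node k l (qL cs')) (1:ℝ) from
              funext fun cs' => by rw [nf_node]]
          rw [← bindF_mapDomain qL (graftList σ a (qL cs))
              (fun e => Finsupp.single (DT.node k l e) (1:ℝ)),
            ← bindF_mapDomain qL (graftList σ a cs)
              (fun e => Finsupp.single (DT.node k l e) (1:ℝ)), keyG σ a]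
    · intro cs hcs
      cases cs with
      | nil => exact ⟨fun _ => rfl, fun _ _ => rfl⟩
      | cons c cs' =>
        have h2 : sizeOf c.2 < n :=
          lt_of_lt_of_le (child_size_lt (List.mem_cons_self (a := c) (l := cs'))) hcs
        have h3 : sizeOf cs' < n := by
          simp only [List.cons.sizeOf_spec] at hcs
          have : 0 < sizeOf c := by obtain ⟨e, t⟩ := c; simp only [Prod.mk.sizeOf_spec]; omega
          omega
        have hqAll : ∀ (t : DT d Lp Lm),
            qL (((nfc c).1, t) :: cs'.map nfc) = qL ((c.1, t) :: cs') := by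
          intro t
          show qL ((c.1, t) :: cs'.map nfc) = qL ((c.1, t) :: cs')
          rw [qL_cons, qL_cons, qL, map_nfc_idem, ← qL]
        have hqc : ∀ u, qL (nfc c :: u) = sortL (nfc c :: qL u) := by
          intro u
          rw [qL_cons, nfc_idem]
        constructor
        · intro i
          rw [List.map_cons, upEList, upEList, Finsupp.mapDomain_add, Finsupp.mapDomain_add,
            mapDomain_bindF_single, mapDomain_bindF_single,
            mapDomain_bindF_single, mapDomain_bindF_single]
          congr 1
          · show bindF (upE i (nfc c).2) _ = _
            rw [show (nfc c).2 = c.2.nf from rfl, ((ih _ h2).1 c.2 le_rfl).1 i]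
            exact bindF_congr fun t => by rw [hqAll t]
          · rw [show (fun u => Finsupp.single (qL (nfc c :: u)) (1:ℝ)) =
                fun u => Finsupp.single (sortL (nfc c :: qL u)) (1:ℝ) from
                funext fun u => by rw [hqc],
              show (fun u => Finsupp.single (qL (c :: u)) (1:ℝ)) =
                fun u => Finsupp.single (sortL (nfc c :: qL u)) (1:ℝ) from
                funext fun u => by rw [qL_cons],
              ← bindF_mapDomain qL (upEList i (cs'.map nfc))
                (fun e => Finsupp.single (sortL (nfc c :: e)) (1:ℝ)),
              ← bindF_mapDomain qL (upEList i cs')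
                (fun e => Finsupp.single (sortL (nfc c :: e)) (1:ℝ)),
              ((ih _ h3).2 cs' le_rfl).1 i]
        · intro σ a
          rw [List.map_cons, graftList, graftList, Finsupp.mapDomain_add, Finsupp.mapDomain_add,
            mapDomain_bindF_single, mapDomain_bindF_single,
            mapDomain_bindF_single, mapDomain_bindF_single]
          congr 1
          · show bindF (graftD σ a (nfc c).2) _ = _
            rw [show (nfc c).2 = c.2.nf from rfl, ((ih _ h2).1 c.2 le_rfl).2 σ a]
            exact bindF_congr fun t => by rw [hqAll t]
          · rw [show (fun u => Finsupp.single (qL (nfc c :: u)) (1:ℝ)) =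
                fun u => Finsupp.single (sortL (nfc c :: qL u)) (1:ℝ) from
                funext fun u => by rw [hqc],
              show (fun u => Finsupp.single (qL (c :: u)) (1:ℝ)) =
                fun u => Finsupp.single (sortL (nfc c :: qL u)) (1:ℝ) from
                funext fun u => by rw [qL_cons],
              ← bindF_mapDomain qL (graftList σ a (cs'.map nfc))
                (fun e => Finsupp.single (sortL (nfc c :: e)) (1:ℝ)),
              ← bindF_mapDomain qL (graftList σ a cs')
                (fun e => Finsupp.single (sortL (nfc c :: e)) (1:ℝ)),
              ((ih _ h3).2 cs' le_rfl).2 σ a]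

theorem upE_nf (i : Fin (d+1)) (t : DT d Lp Lm) : upE i t.nf = upE i t :=
  ((nf_inv_aux (sizeOf t)).1 t le_rfl).1 i

theorem graftD_nf (σ : DT d Lp Lm) (a : Lp × MIdx d) (t : DT d Lp Lm) :
    graftD σ a t.nf = graftD σ a t :=
  ((nf_inv_aux (sizeOf t)).1 t le_rfl).2 σ a

end NfInv

/-! ### multi-index binomial lemmas -/

section MBinom
variable {d : ℕ}

theorem mbinom_eq_zero_of_not_le {k ℓ : MIdx d} (h : ¬ ℓ ≤ k) : mbinom k ℓ = 0 := by
  rw [Pi.le_def] at h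
  push_neg at h
  obtain ⟨j, hj⟩ := h
  exact Finset.prod_eq_zero (Finset.mem_univ j) (Nat.choose_eq_zero_of_lt hj)

theorem mbinom_succ (k ℓ : MIdx d) (i : Fin (d+1)) :
    mbinom (k + Pi.single i 1) ℓ =
      mbinom k ℓ + (if ℓ i = 0 then 0 else mbinom k (ℓ - Pi.single i 1)) := by
  have hrest : ∀ (k' : MIdx d), mbinom k' ℓ =
      (k' i).choose (ℓ i) * ∏ j ∈ Finset.univ.erase i, (k' j).choose (ℓ j) := by
    intro k'
    rw [mbinom, ← Finset.mul_prod_erase Finset.univ _ (Finset.mem_univ i)]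
  have hrest' : mbinom k (ℓ - Pi.single i 1) =
      (k i).choose (ℓ i - 1) * ∏ j ∈ Finset.univ.erase i, (k j).choose (ℓ j) := by
    rw [mbinom, ← Finset.mul_prod_erase Finset.univ _ (Finset.mem_univ i)]
    congr 1
    · congr 1
      simp [Pi.sub_apply, Pi.single_apply]
    · refine Finset.prod_congr rfl fun j hj => ?_
      have hji : j ≠ i := Finset.ne_of_mem_erase hj
      congr 1
      simp [Pi.sub_apply, Pi.single_apply, hji]
  have hadd : ∀ j, (k + Pi.single i 1 : MIdx d) j = k j + (if j = i then 1 else 0) := by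
    intro j
    simp [Pi.add_apply, Pi.single_apply]
  rw [hrest (k + Pi.single i 1), hrest k, hrest']
  have hprod : ∏ j ∈ Finset.univ.erase i, ((k + Pi.single i 1 : MIdx d) j).choose (ℓ j) =
      ∏ j ∈ Finset.univ.erase i, (k j).choose (ℓ j) := by
    refine Finset.prod_congr rfl fun j hj => ?_
    have hji : j ≠ i := Finset.ne_of_mem_erase hj
    rw [hadd j, if_neg hji, Nat.add_zero]
  rw [hprod, hadd i, if_pos rfl]
  rcases Nat.eq_zero_or_pos (ℓ i) with h0 | hp
  · rw [h0, if_pos rfl]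
    simp
  · obtain ⟨s, hs⟩ := Nat.exists_eq_succ_of_ne_zero (Nat.pos_iff_ne_zero.mp hp)
    rw [if_neg (Nat.pos_iff_ne_zero.mp hp), hs]
    rw [Nat.choose_succ_succ]
    ring_nf
    rw [Nat.succ_sub_one]
    ring

end MBinom

section PascalSum
variable {d : ℕ}

theorem mle {x y : MIdx d} (h : x ≤ y) (j : Fin (d+1)) : x j ≤ y j := Pi.le_def.mp h j
theorem mle' {x y : MIdx d} (h : ∀ j, x j ≤ y j) : x ≤ y := Pi.le_def.mpr h

theorem mA1 {k ℓ : MIdx d} (h : ℓ ≤ k) (s : MIdx d) : (k - ℓ) + s = (k + s) - ℓ := by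
  funext j
  have := mle h j
  simp only [Pi.add_apply, Pi.sub_apply]
  omega

theorem mA2 (ℓ s : MIdx d) : (ℓ + s) - s = ℓ := by
  funext j; simp only [Pi.add_apply, Pi.sub_apply]; omega

theorem mA3 (k ℓ s : MIdx d) : (k + s) - (ℓ + s) = k - ℓ := by
  funext j; simp only [Pi.add_apply, Pi.sub_apply]; omega

theorem mA4 (m ℓ s : MIdx d) : m - (ℓ + s) = (m - s) - ℓ := by
  funext j; simp only [Pi.add_apply, Pi.sub_apply]; omega

theorem mA5 {ℓ : MIdx d} {i : Fin (d+1)} (h : ℓ i ≠ 0) : (ℓ - Pi.single i 1) + Pi.single i 1 = ℓ := by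
  funext j
  rcases eq_or_ne j i with rfl | hji
  · simp only [Pi.add_apply, Pi.sub_apply, Pi.single_eq_same]
    omega
  · simp only [Pi.add_apply, Pi.sub_apply, Pi.single_eq_of_ne hji]
    omega

theorem mfwd {k m ℓ : MIdx d} {i : Fin (d+1)} (h : ℓ ≤ k ⊓ (m - Pi.single i 1)) (hm : m i ≠ 0) :
    ℓ + Pi.single i 1 ≤ (k + Pi.single i 1) ⊓ m ∧ (ℓ + Pi.single i 1 : MIdx d) i ≠ 0 := by
  rw [le_inf_iff] at h ⊢
  obtain ⟨h1, h2⟩ := h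
  refine ⟨⟨mle' fun j => ?_, mle' fun j => ?_⟩, ?_⟩
  · have := mle h1 j
    simp only [Pi.add_apply]
    omega
  · have := mle h2 j
    simp only [Pi.sub_apply] at this
    rcases eq_or_ne j i with rfl | hji
    · simp only [Pi.add_apply, Pi.single_eq_same] at this ⊢
      omega
    · simp only [Pi.add_apply, Pi.single_eq_of_ne hji] at this ⊢
      omega
  · simp only [Pi.add_apply, Pi.single_eq_same]
    omega

theorem mbwd {k m ℓ : MIdx d} {i : Fin (d+1)} (h : ℓ ≤ (k + Pi.single i 1) ⊓ m) (hi : ℓ i ≠ 0) :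
    ℓ - Pi.single i 1 ≤ k ⊓ (m - Pi.single i 1) := by
  rw [le_inf_iff] at h ⊢
  obtain ⟨h1, h2⟩ := h
  refine ⟨mle' fun j => ?_, mle' fun j => ?_⟩
  · have := mle h1 j
    rcases eq_or_ne j i with rfl | hji
    · simp only [Pi.add_apply, Pi.sub_apply, Pi.single_eq_same] at this ⊢
      omega
    · simp only [Pi.add_apply, Pi.sub_apply, Pi.single_eq_of_ne hji] at this ⊢
      omega
  · have := mle h2 j
    rcases eq_or_ne j i with rfl | hji
    · simp only [Pi.sub_apply, Pi.single_eq_same]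
      omega
    · simp only [Pi.sub_apply, Pi.single_eq_of_ne hji]
      omega


variable {M : Type} [AddCommGroup M] [Module ℝ M]

theorem pascal_sum (k m : MIdx d) (i : Fin (d+1)) (F : MIdx d → MIdx d → M) :
    (∑ ℓ ∈ Finset.Iic (k ⊓ m), (mbinom k ℓ : ℝ) • F ((k - ℓ) + Pi.single i 1) (m - ℓ)) =
      (∑ ℓ ∈ Finset.Iic ((k + Pi.single i 1) ⊓ m),
        (mbinom (k + Pi.single i 1) ℓ : ℝ) • F ((k + Pi.single i 1) - ℓ) (m - ℓ)) -
      (if m i = 0 then 0 else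
        ∑ ℓ ∈ Finset.Iic (k ⊓ (m - Pi.single i 1)),
          (mbinom k ℓ : ℝ) • F (k - ℓ) ((m - Pi.single i 1) - ℓ)) := by
  have hsplit : (∑ ℓ ∈ Finset.Iic ((k + Pi.single i 1) ⊓ m),
      (mbinom (k + Pi.single i 1) ℓ : ℝ) • F ((k + Pi.single i 1) - ℓ) (m - ℓ)) =
      (∑ ℓ ∈ Finset.Iic ((k + Pi.single i 1) ⊓ m),
        (mbinom k ℓ : ℝ) • F ((k + Pi.single i 1) - ℓ) (m - ℓ)) +
      (∑ ℓ ∈ Finset.Iic ((k + Pi.single i 1) ⊓ m),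
        (if ℓ i = 0 then (0:ℝ) else (mbinom k (ℓ - Pi.single i 1) : ℝ)) •
          F ((k + Pi.single i 1) - ℓ) (m - ℓ)) := by
    rw [← Finset.sum_add_distrib]
    refine Finset.sum_congr rfl fun ℓ _ => ?_
    rw [← add_smul, mbinom_succ k ℓ i]
    congr 1
    push_cast
    split <;> simp
  rw [hsplit]
  have h1 : (∑ ℓ ∈ Finset.Iic (k ⊓ m), (mbinom k ℓ : ℝ) • F ((k - ℓ) + Pi.single i 1) (m - ℓ)) =
      ∑ ℓ ∈ Finset.Iic ((k + Pi.single i 1) ⊓ m),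
        (mbinom k ℓ : ℝ) • F ((k + Pi.single i 1) - ℓ) (m - ℓ) := by
    rw [show (∑ ℓ ∈ Finset.Iic (k ⊓ m),
        (mbinom k ℓ : ℝ) • F ((k - ℓ) + Pi.single i 1) (m - ℓ)) =
        ∑ ℓ ∈ Finset.Iic (k ⊓ m),
        (mbinom k ℓ : ℝ) • F ((k + Pi.single i 1) - ℓ) (m - ℓ) from
      Finset.sum_congr rfl fun ℓ hℓ => by
        rw [Finset.mem_Iic, le_inf_iff] at hℓ
        rw [mA1 hℓ.1 (Pi.single i 1)]]
    refine Finset.sum_subset (Finset.Iic_subset_Iic.mpr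
      (inf_le_inf_right m (le_add_of_nonneg_right (by positivity)))) ?_
    intro ℓ hℓ hℓ'
    rw [Finset.mem_Iic, le_inf_iff] at hℓ hℓ'
    have : ¬ ℓ ≤ k := fun hlk => hℓ' ⟨hlk, hℓ.2⟩
    rw [mbinom_eq_zero_of_not_le this]
    simp
  rw [← h1, eq_sub_iff_add_eq, add_right_inj]
  by_cases hm : m i = 0
  · rw [if_pos hm]
    refine (Finset.sum_eq_zero fun ℓ hℓ => ?_).symm
    rw [Finset.mem_Iic, le_inf_iff] at hℓ
    have h2 := mle hℓ.2 i
    have : ℓ i = 0 := by omega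
    rw [if_pos this, zero_smul]
  · rw [if_neg hm]
    rw [show (∑ ℓ ∈ Finset.Iic ((k + Pi.single i 1) ⊓ m),
        (if ℓ i = 0 then (0:ℝ) else (mbinom k (ℓ - Pi.single i 1) : ℝ)) •
          F ((k + Pi.single i 1) - ℓ) (m - ℓ)) =
        ∑ ℓ ∈ (Finset.Iic ((k + Pi.single i 1) ⊓ m)).filter (fun ℓ => ¬ ℓ i = 0),
          (mbinom k (ℓ - Pi.single i 1) : ℝ) • F ((k + Pi.single i 1) - ℓ) (m - ℓ) from ?_]
    · refine Finset.sum_nbij' (fun ℓ => ℓ + Pi.single i 1) (fun ℓ => ℓ - Pi.single i 1)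
        ?_ ?_ ?_ ?_ ?_
      · intro ℓ hℓ
        rw [Finset.mem_Iic] at hℓ
        rw [Finset.mem_filter, Finset.mem_Iic]
        exact ⟨(mfwd hℓ hm).1, (mfwd hℓ hm).2⟩
      · intro ℓ hℓ
        rw [Finset.mem_filter, Finset.mem_Iic] at hℓ
        rw [Finset.mem_Iic]
        exact mbwd hℓ.1 hℓ.2
      · intro ℓ hℓ
        exact mA2 ℓ (Pi.single i 1)
      · intro ℓ hℓ
        rw [Finset.mem_filter] at hℓ
        exact mA5 hℓ.2
      · intro ℓ hℓ
        rw [mA2 ℓ (Pi.single i 1), mA3 k ℓ (Pi.single i 1), mA4 m ℓ (Pi.single i 1)]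
    · rw [Finset.sum_filter]
      refine Finset.sum_congr rfl fun ℓ _ => ?_
      rcases eq_or_ne (ℓ i) 0 with h | h
      · simp [h]
      · simp [h]
end PascalSum

section BindFMore
variable {α : Type} {β : Type} [AddCommGroup β] [Module ℝ β]

theorem bindF_sub (x y : α →₀ ℝ) (f : α → β) :
    bindF (x - y) f = bindF x f - bindF y f := by
  rw [bindF_eq_lift, bindF_eq_lift, bindF_eq_lift, map_sub]

theorem bindF_zero_fun (x : α →₀ ℝ) : bindF x (fun _ => (0:β)) = 0 := by
  simp [bindF]

theorem bindF_finset_sum_fun {ι : Type*} (x : α →₀ ℝ) (s : Finset ι) (g : ι → α → β) :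
    bindF x (fun u => ∑ j ∈ s, g j u) = ∑ j ∈ s, bindF x (g j) := by
  classical
  induction s using Finset.induction_on with
  | empty => simp [bindF_zero_fun]
  | insert _ _ hni ih =>
    rename_i j s
    rw [Finset.sum_insert hni,
      show (fun u => ∑ j' ∈ insert j s, g j' u) = fun u => g j u + ∑ j' ∈ s, g j' u from
        funext fun u => Finset.sum_insert hni,
      bindF_add_fun, ih]

end BindFMore

section MainAux
variable {d : ℕ} {Lp Lm : Type}

theorem main_aux : ∀ n : ℕ,
    (∀ τ : DT d Lp Lm, sizeOf τ ≤ n →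
      ∀ (σ : DT d Lp Lm) (a : Lp × MIdx d) (i : Fin (d+1)),
      bindF (graftD σ a τ) (fun u => upE i u) =
        bindF (upE i σ) (fun s => graftD s a τ) +
          bindF (upE i τ) (fun t => graftD σ a t) -
          (if a.2 i = 0 then 0 else graftD σ (a.1, a.2 - Pi.single i 1) τ)) ∧
    (∀ cs : List ((Lp × MIdx d) × DT d Lp Lm), sizeOf cs ≤ n →
      ∀ (σ : DT d Lp Lm) (a : Lp × MIdx d) (i : Fin (d+1)),
      bindF (graftList σ a cs) (fun u => upEList i u) =
        bindF (upE i σ) (fun s => graftList s a cs) +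
          bindF (upEList i cs) (fun u => graftList σ a u) -
          (if a.2 i = 0 then 0 else graftList σ (a.1, a.2 - Pi.single i 1) cs)) := by
  intro n
  induction n using Nat.strong_induction_on with
  | _ n ih =>
    constructor
    · rintro ⟨k, l, cs⟩ ht σ a i
      have hcs : sizeOf cs < n := lt_of_lt_of_le (cs_size_lt k l cs) ht
      have IHl := (ih _ hcs).2 cs le_rfl σ a i
      have hA := congrArg
        (fun z => bindF z (fun u' => Finsupp.single (DT.nf (DT.node k l u')) (1:ℝ))) IHl
      have hp := pascal_sum (M := FS d Lp Lm) k a.2 i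
        (fun k' m' => Finsupp.single (DT.nf (DT.node k' l (((a.1, m'), σ) :: cs))) (1:ℝ))
      simp only [bindF_add, bindF_sub, bindF_assoc, apply_ite
        (fun z => bindF z (fun u' => Finsupp.single (DT.nf (DT.node k l u')) (1:ℝ))),
        bindF_zero] at hA
      simp only [graftD, upE, upEList, upE_nf, graftD_nf, bindF_add, bindF_add_fun,
        bindF_assoc, bindF_finset_sum, bindF_finset_sum_fun, bindF_smul, bindF_smul_fun,
        bindF_single, one_smul, smul_add, Finset.sum_add_distrib, bindF_zero]
      rw [hA, hp]
      by_cases hm : a.2 i = 0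
      · simp only [if_pos hm, sub_zero]
        abel
      · simp only [if_neg hm]
        abel
    · intro cs hsz σ a i
      cases cs with
      | nil =>
        rw [graftList, graftList]
        simp only [graftList, upEList, bindF_zero, bindF_zero_fun]
        simp
      | cons c cs =>
        have h2 : sizeOf c.2 < n :=
          lt_of_lt_of_le (child_size_lt (List.mem_cons_self (a := c) (l := cs))) hsz
        have h3 : sizeOf cs < n := by
          simp only [List.cons.sizeOf_spec] at hsz
          have : 0 < sizeOf c := by
            obtain ⟨e, t⟩ := c; simp only [Prod.mk.sizeOf_spec]; omega
          omega
        have IHt := (ih _ h2).1 c.2 le_rfl σ a i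
        have IHl := (ih _ h3).2 cs le_rfl σ a i
        have hA1 := congrArg
          (fun z => bindF z (fun t => Finsupp.single ((c.1, t) :: cs) (1:ℝ))) IHt
        have hA4 := congrArg
          (fun z => bindF z (fun u => Finsupp.single (c :: u) (1:ℝ))) IHl
        simp only [bindF_add, bindF_sub, bindF_assoc, apply_ite
          (fun z => bindF z (fun t => Finsupp.single ((c.1, t) :: cs) (1:ℝ))),
          bindF_zero] at hA1
        simp only [bindF_add, bindF_sub, bindF_assoc, apply_ite
          (fun z => bindF z (fun u => Finsupp.single (c :: u) (1:ℝ))),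
          bindF_zero] at hA4
        simp only [graftList, upEList, bindF_add, bindF_add_fun, bindF_assoc,
          bindF_single, one_smul, apply_ite (fun z => bindF z (fun u => upEList i u)),
          bindF_zero]
        rw [hA1, hA4]
        rw [bindF_comm (graftD σ a c.2) (upEList i cs)
          (fun t u => Finsupp.single ((c.1, t) :: u) (1:ℝ))]
        rw [bindF_comm (graftList σ a cs) (upE i c.2)
          (fun u t => Finsupp.single ((c.1, t) :: u) (1:ℝ))]
        by_cases hm : a.2 i = 0
        · simp only [if_pos hm, sub_zero]
          abel
        · simp only [if_neg hm]
          abel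

end MainAux
/-- non-commutation of raising and deformed grafting:
`↑^i (σ ↷̂^a τ) = (↑^i σ) ↷̂^a τ + σ ↷̂^a (↑^i τ) − σ ↷̂^{a−e_i} τ`,
the last term being zero when the `i`-th component of the edge decoration vanishes. -/
theorem upE_graftD (σ τ : DT d Lp Lm) (a : Lp × MIdx d) (i : Fin (d+1)) :
    bindF (graftD σ a τ) (fun u => upE i u) =
      bindF (upE i σ) (fun s => graftD s a τ) +
        bindF (upE i τ) (fun t => graftD σ a t) -
        (if a.2 i = 0 then 0 else graftD σ (a.1, a.2 - Pi.single i 1) τ) :=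
  (main_aux (sizeOf τ)).1 τ le_rfl σ a i
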